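/- arXiv:2402.03845 — 2 statements merged into one kernel-verified Lean document; each statement's English description precedes it below -/
import Mathlib

section
/- Fix σ₁ > 0 and σ₂ > 0. Define p : E → ℝ (E = EuclideanSpace ℝ (Fin 2)) by p(x) = (2π σ₁ σ₂)⁻¹ · exp(−x₁²/(2σ₁²) − x₂²/(2σ₂²)), and r : E → E by r(x) = (−σ₁² x₂, σ₂² x₁). Then: (i) div r(x) = 0 for all x; (ii) ⟪r(x), ∇(Real.log ∘ p)(x)⟫ = 0 for all x, so r satisfies the gauge freedom condition with respect to p; and (iii) for every x, the Fréchet derivative Dr(x) is not symmetric, i.e., there exist u, v ∈ E with ⟪Dr(x) u, v⟫ ≠ ⟪Dr(x) v, u⟫. (The counter-example of Section 4: a non-conservative vector field satisfying the gauge freedom condition for a diagonal Gaussian density.) -/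
open scoped RealInnerProductSpace
open Real

/-- The divergence of a vector field `v` at `x`: the trace of its Fréchet derivative. -/
noncomputable def div (v : EuclideanSpace ℝ (Fin 2) → EuclideanSpace ℝ (Fin 2))
    (x : EuclideanSpace ℝ (Fin 2)) : ℝ :=
  LinearMap.trace ℝ (EuclideanSpace ℝ (Fin 2)) (fderiv ℝ v x).toLinearMap

/-- The counter-example of Section 4: for the diagonal Gaussian density `p` the
rotation-like field `r x = (−σ₁² x₂, σ₂² x₁)` is divergence free, satisfies the gauge
freedom condition, yet has a non-symmetric Jacobian everywhere. -/
theorem stmt9 (σ₁ σ₂ : ℝ) (hσ₁ : 0 < σ₁) (hσ₂ : 0 < σ₂)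
    (p : EuclideanSpace ℝ (Fin 2) → ℝ)
    (hp : p = fun x => (2 * π * σ₁ * σ₂)⁻¹ *
      Real.exp (-(x 0) ^ 2 / (2 * σ₁ ^ 2) - (x 1) ^ 2 / (2 * σ₂ ^ 2)))
    (r : EuclideanSpace ℝ (Fin 2) → EuclideanSpace ℝ (Fin 2))
    (hr : r = fun x => (WithLp.equiv 2 (Fin 2 → ℝ)).symm ![-σ₁ ^ 2 * x 1, σ₂ ^ 2 * x 0]) :
    (∀ x, div r x = 0) ∧
    (∀ x, ⟪r x, gradient (Real.log ∘ p) x⟫ = 0) ∧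
    (∀ x, ∃ u v : EuclideanSpace ℝ (Fin 2),
      ⟪fderiv ℝ r x u, v⟫ ≠ ⟪fderiv ℝ r x v, u⟫) := by
  set L : EuclideanSpace ℝ (Fin 2) →L[ℝ] EuclideanSpace ℝ (Fin 2) :=
    ((-σ₁^2) • (EuclideanSpace.proj (1:Fin 2) :
        EuclideanSpace ℝ (Fin 2) →L[ℝ] ℝ)).smulRight (EuclideanSpace.single (0:Fin 2) (1:ℝ))
      + ((σ₂^2) • (EuclideanSpace.proj (0:Fin 2) :
        EuclideanSpace ℝ (Fin 2) →L[ℝ] ℝ)).smulRight (EuclideanSpace.single (1:Fin 2) (1:ℝ))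
    with hL
  have hrL : r = ⇑L := by
    funext x; ext i
    fin_cases i <;> simp [hr, hL, EuclideanSpace.single_apply]
  have hfd : ∀ x : EuclideanSpace ℝ (Fin 2), fderiv ℝ r x = L := by
    intro x; rw [hrL]; exact L.fderiv
  refine ⟨?_, ?_, ?_⟩
  · intro x
    rw [div, hfd]
    rw [LinearMap.trace_eq_matrix_trace ℝ (EuclideanSpace.basisFun (Fin 2) ℝ).toBasis]
    rw [Matrix.trace]
    simp [LinearMap.toMatrix_apply, hL, EuclideanSpace.single_apply, Fin.sum_univ_two, Matrix.vecMulVec_apply]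
  · intro x
    have hgrad : gradient (Real.log ∘ p) x =
        (WithLp.equiv 2 (Fin 2 → ℝ)).symm ![-(x 0)/σ₁^2, -(x 1)/σ₂^2] := by
      have hc : (0:ℝ) < (2 * π * σ₁ * σ₂)⁻¹ := by positivity
      have hlog : Real.log ∘ p = fun y : EuclideanSpace ℝ (Fin 2) =>
          Real.log ((2 * π * σ₁ * σ₂)⁻¹) + (-(y 0)^2/(2*σ₁^2) - (y 1)^2/(2*σ₂^2)) := by
        funext y
        simp only [Function.comp_apply, hp]
        rw [Real.log_mul (ne_of_gt hc) (Real.exp_ne_zero _), Real.log_exp]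
      have h0 : HasFDerivAt (fun y : EuclideanSpace ℝ (Fin 2) => y 0)
          (EuclideanSpace.proj (0:Fin 2) : EuclideanSpace ℝ (Fin 2) →L[ℝ] ℝ) x :=
        (EuclideanSpace.proj (0:Fin 2) : EuclideanSpace ℝ (Fin 2) →L[ℝ] ℝ).hasFDerivAt
      have h1 : HasFDerivAt (fun y : EuclideanSpace ℝ (Fin 2) => y 1)
          (EuclideanSpace.proj (1:Fin 2) : EuclideanSpace ℝ (Fin 2) →L[ℝ] ℝ) x :=
        (EuclideanSpace.proj (1:Fin 2) : EuclideanSpace ℝ (Fin 2) →L[ℝ] ℝ).hasFDerivAt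
      have H : HasFDerivAt (Real.log ∘ p)
          ((-(x 0)/σ₁^2) • (EuclideanSpace.proj (0:Fin 2) :
              EuclideanSpace ℝ (Fin 2) →L[ℝ] ℝ)
            + (-(x 1)/σ₂^2) • (EuclideanSpace.proj (1:Fin 2) :
              EuclideanSpace ℝ (Fin 2) →L[ℝ] ℝ)) x := by
        rw [hlog]
        have H2 := ((((h0.mul h0).const_mul ((2*σ₁^2)⁻¹)).neg.sub
          ((h1.mul h1).const_mul ((2*σ₂^2)⁻¹))).const_add (Real.log ((2 * π * σ₁ * σ₂)⁻¹)))
        convert (config := { preTransparency := .default }) H2 using 1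
        · funext y; simp only [Pi.mul_apply, Pi.neg_apply, Pi.sub_apply]; field_simp
        · ext y
          simp [ContinuousLinearMap.smul_apply, smul_eq_mul]
          field_simp
          ring
      have HG : HasGradientAt (Real.log ∘ p)
          ((WithLp.equiv 2 (Fin 2 → ℝ)).symm ![-(x 0)/σ₁^2, -(x 1)/σ₂^2]) x := by
        rw [hasGradientAt_iff_hasFDerivAt]
        refine H.congr_fderiv ?_
        ext y
        simp [InnerProductSpace.toDual_apply_apply, PiLp.inner_apply, Fin.sum_univ_two,
          RCLike.inner_apply]
        ring
      exact HG.gradient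
    rw [hgrad, hr]
    simp [PiLp.inner_apply, Fin.sum_univ_two, RCLike.inner_apply]
    field_simp
    ring
  · intro x
    refine ⟨EuclideanSpace.single (0:Fin 2) 1, EuclideanSpace.single (1:Fin 2) 1, ?_⟩
    rw [hfd]
    have h1 : ⟪L (EuclideanSpace.single (0:Fin 2) 1),
        EuclideanSpace.single (1:Fin 2) (1:ℝ)⟫ = σ₂^2 := by
      simp [hL, PiLp.inner_apply, Fin.sum_univ_two, EuclideanSpace.single_apply,
        RCLike.inner_apply]
    have h2 : ⟪L (EuclideanSpace.single (1:Fin 2) 1),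
        EuclideanSpace.single (0:Fin 2) (1:ℝ)⟫ = -σ₁^2 := by
      simp [hL, PiLp.inner_apply, Fin.sum_univ_two, EuclideanSpace.single_apply,
        RCLike.inner_apply]
    rw [h1, h2]
    nlinarith
end

section
/- There exists a differentiable vector field r : E → E (E = EuclideanSpace ℝ (Fin 2)), not identically zero, such that: (i) r satisfies the gauge freedom condition with respect to the standard Gaussian density p(x) = (2π)⁻¹ · exp(−‖x‖²/2), i.e., div r(x) + ⟪r(x), ∇(Real.log ∘ p)(x)⟫ = 0 for all x; and (ii) r is not conservative: there is no differentiable φ : E → ℝ with ∇φ(x) = r(x) for all x. (Section 4: conservativity is not necessary for exact density estimation and sampling, since the gauge freedom condition can hold for non-conservative fields.) -/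
open scoped RealInnerProductSpace
open Real

noncomputable section AuxStmt11

local notation "E2" => EuclideanSpace ℝ (Fin 2)

/-- Rotation by 90 degrees, as a linear map. -/
def Alin : E2 →ₗ[ℝ] E2 where
  toFun x := WithLp.toLp 2 ![-(x 1), x 0]
  map_add' x y := by
    ext i; fin_cases i <;> simp [PiLp.add_apply] <;> ring
  map_smul' c x := by
    ext i; fin_cases i <;> simp [PiLp.smul_apply] <;> ring

def Acl : E2 →L[ℝ] E2 := Alin.toContinuousLinearMap

lemma Acl_apply (x : E2) (i : Fin 2) : Acl x i = ![-(x 1), x 0] i := rfl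

lemma trace_Acl : LinearMap.trace ℝ E2 (Acl.toLinearMap) = 0 := by
  rw [LinearMap.trace_eq_matrix_trace ℝ (PiLp.basisFun 2 ℝ (Fin 2))]
  simp [Matrix.trace, LinearMap.toMatrix_apply, Fin.sum_univ_two, Acl, Alin]

lemma gradient_logp (x : E2) :
    gradient (Real.log ∘ fun y : E2 =>
      (2 * π)⁻¹ * Real.exp (-‖y‖ ^ 2 / 2)) x = -x := by
  have hfun : (Real.log ∘ fun y : E2 => (2 * π)⁻¹ * Real.exp (-‖y‖ ^ 2 / 2)) =
      fun y : E2 => Real.log (2 * π)⁻¹ + -2⁻¹ * ‖y‖ ^ 2 := by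
    funext y
    rw [Function.comp_apply, Real.log_mul (by positivity) (Real.exp_ne_zero _), Real.log_exp]
    ring
  rw [hfun]
  have h1 : HasFDerivAt (fun y : E2 => ‖y‖ ^ 2) (2 • (innerSL ℝ x)) x := by
    simpa using (hasFDerivAt_id x).norm_sq
  have h2 := (h1.const_mul (-2⁻¹ : ℝ)).const_add (Real.log (2 * π)⁻¹)
  have h3 : HasGradientAt (fun y : E2 => Real.log (2 * π)⁻¹ + -2⁻¹ * ‖y‖ ^ 2) (-x) x := by
    rw [hasGradientAt_iff_hasFDerivAt]
    refine h2.congr_fderiv ?_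
    ext y
    simp [InnerProductSpace.toDual_apply_apply, inner_neg_left]
  exact h3.gradient

end AuxStmt11

/-- Section 4: conservativity is not necessary. There is a nonzero differentiable
vector field satisfying the gauge freedom condition for the standard Gaussian density
which is not the gradient of any differentiable potential. -/
theorem stmt11 :
    ∃ r : EuclideanSpace ℝ (Fin 2) → EuclideanSpace ℝ (Fin 2),
      Differentiable ℝ r ∧ r ≠ 0 ∧
      (∀ x, div r x +
        ⟪r x, gradient (Real.log ∘ fun y : EuclideanSpace ℝ (Fin 2) =>
          (2 * π)⁻¹ * Real.exp (-‖y‖ ^ 2 / 2)) x⟫ = 0) ∧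
      ¬ ∃ φ : EuclideanSpace ℝ (Fin 2) → ℝ, Differentiable ℝ φ ∧ ∀ x, gradient φ x = r x := by
  refine ⟨fun x => Acl x, Acl.differentiable, ?_, ?_, ?_⟩
  · intro h
    have h1 := congrFun h (EuclideanSpace.single 0 1)
    have h2 := congrArg (fun v : EuclideanSpace ℝ (Fin 2) => v 1) h1
    simp [Acl_apply, EuclideanSpace.single_apply] at h2
  · intro x
    rw [gradient_logp]
    have hdiv : div (fun x => Acl x) x = 0 := by
      unfold div
      rw [Acl.fderiv]
      exact trace_Acl
    rw [hdiv]
    simp [PiLp.inner_apply, Fin.sum_univ_two, Acl_apply, PiLp.neg_apply]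
    ring
  · rintro ⟨φ, hφ, hgrad⟩
    set B : EuclideanSpace ℝ (Fin 2) →L[ℝ] (EuclideanSpace ℝ (Fin 2) →L[ℝ] ℝ) :=
      ((InnerProductSpace.toDual ℝ (EuclideanSpace ℝ (Fin 2))).toContinuousLinearEquiv :
        EuclideanSpace ℝ (Fin 2) ≃L[ℝ] _).toContinuousLinearMap.comp Acl with hB
    have hfd : ∀ y, HasFDerivAt φ
        ((fun y => InnerProductSpace.toDual ℝ (EuclideanSpace ℝ (Fin 2)) (Acl y)) y) y := by
      intro y
      have hg : gradient φ y = Acl y := hgrad y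
      have : fderiv ℝ φ y = InnerProductSpace.toDual ℝ (EuclideanSpace ℝ (Fin 2)) (Acl y) := by
        rw [← hg]
        simp [gradient]
      simpa [this] using (hφ y).hasFDerivAt
    have hB' : HasFDerivAt
        (fun y => InnerProductSpace.toDual ℝ (EuclideanSpace ℝ (Fin 2)) (Acl y)) B 0 :=
      B.hasFDerivAt
    have hsym := second_derivative_symmetric hfd hB'
      (EuclideanSpace.single 0 1) (EuclideanSpace.single 1 1)
    have h1 : B (EuclideanSpace.single 0 1) (EuclideanSpace.single 1 1) = 1 := by
      simp [hB, InnerProductSpace.toDual_apply_apply, PiLp.inner_apply, Fin.sum_univ_two,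
        Acl_apply, EuclideanSpace.single_apply]
    have h2 : B (EuclideanSpace.single 1 1) (EuclideanSpace.single 0 1) = -1 := by
      simp [hB, InnerProductSpace.toDual_apply_apply, PiLp.inner_apply, Fin.sum_univ_two,
        Acl_apply, EuclideanSpace.single_apply]
    rw [h1, h2] at hsym
    linarith
end
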